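/- Any finite set S ⊆ 𝒳₁ × 𝒳₂ such that |S| ≤ K₁K₂, each second-coordinate fiber of S has size at most K₁, and each first-coordinate fiber has size at most K₂, can be partitioned into K₂ parts R₁, ..., R_{K₂} such that each part has size at most K₁ and each part contains at most one pair with any given first coordinate. -/

import Mathlib

theorem stmt_8 {X₁ X₂ : Type*} [DecidableEq X₁] [DecidableEq X₂]
    (K₁ K₂ : ℕ) (hK₁ : 0 < K₁) (hK₂ : 0 < K₂)
    (S : Finset (X₁ × X₂))
    (hS : S.card ≤ K₁ * K₂)
    (hfib2 : ∀ x₂, (S.filter (fun z => z.2 = x₂)).card ≤ K₁)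
    (hfib1 : ∀ x₁, (S.filter (fun z => z.1 = x₁)).card ≤ K₂) :
    ∃ R : Fin K₂ → Finset (X₁ × X₂),
      (∀ i j, i ≠ j → Disjoint (R i) (R j)) ∧
      Finset.univ.biUnion R = S ∧
      (∀ i, (R i).card ≤ K₁) ∧
      (∀ i x₁, ((R i).filter (fun z => z.1 = x₁)).card ≤ 1) := by
  classical
  set F : X₁ → Finset (X₁ × X₂) := fun a => S.filter (fun z => z.1 = a) with hF
  set l : List X₁ := (S.image Prod.fst).toList with hl
  set L : List ℕ := l.map (fun a => (F a).card) with hLdef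
  set pos : X₁ × X₂ → ℕ :=
    fun z => @List.idxOf _ instBEqOfDecidableEq z (F z.1).toList with hposdef
  set idx : X₁ × X₂ → ℕ :=
    fun z => (L.take (l.idxOf z.1)).sum + pos z with hidxdef
  have hmem_l : ∀ z ∈ S, z.1 ∈ l := by
    intro z hz
    rw [hl, Finset.mem_toList]
    exact Finset.mem_image_of_mem _ hz
  have hzF : ∀ z ∈ S, z ∈ F z.1 := by
    intro z hz; simp [hF, hz]
  have hpos_lt : ∀ z ∈ S, pos z < (F z.1).card := by
    intro z hz
    rw [hposdef]
    simp only
    rw [← Finset.length_toList]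
    exact (@List.idxOf_lt_length_iff _ instBEqOfDecidableEq _ _ _).mpr ((Finset.mem_toList).mpr (hzF z hz))
  -- total sum of fiber sizes is |S|
  have hsumL : L.sum = S.card := by
    have h1 : S.card = ∑ a ∈ S.image Prod.fst, (F a).card :=
      Finset.card_eq_sum_card_fiberwise (fun z hz => Finset.mem_image_of_mem _ hz)
    rw [h1, hLdef, hl]
    exact Finset.sum_map_toList _ _
  -- prefix sums are monotone
  have hmono : ∀ a b : ℕ, a ≤ b → (L.take a).sum ≤ (L.take b).sum := by
    intro a b hab
    have h : (L.take b).take a = L.take a := by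
      rw [List.take_take, min_eq_left hab]
    calc (L.take a).sum = ((L.take b).take a).sum := by rw [h]
      _ ≤ ((L.take b).take a).sum + ((L.take b).drop a).sum := Nat.le_add_right _ _
      _ = (L.take b).sum := by rw [← List.sum_append, List.take_append_drop]
  have hLlen : L.length = l.length := by rw [hLdef, List.length_map]
  -- the block step
  have hstep : ∀ z ∈ S, (L.take (l.idxOf z.1 + 1)).sum
      = (L.take (l.idxOf z.1)).sum + (F z.1).card := by
    intro z hz
    have hk : l.idxOf z.1 < l.length := List.idxOf_lt_length_iff.mpr (hmem_l z hz)
    have hk' : l.idxOf z.1 < L.length := by rwa [hLlen]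
    rw [List.sum_take_succ L _ hk']
    congr 1
    have h1 : L[l.idxOf z.1] = (F l[l.idxOf z.1]).card := by
      simp only [hLdef, List.getElem_map]
    have h2 : l[l.idxOf z.1] = z.1 := List.getElem_idxOf hk
    simp only [List.get_eq_getElem, h1, h2]
  have hidx_lt : ∀ z ∈ S, idx z < S.card := by
    intro z hz
    have h1 : idx z < (L.take (l.idxOf z.1 + 1)).sum := by
      rw [hstep z hz]
      exact Nat.add_lt_add_left (hpos_lt z hz) _
    have h2 : (L.take (l.idxOf z.1 + 1)).sum ≤ L.sum := by
      have := hmono (l.idxOf z.1 + 1) L.length (by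
        have hk : l.idxOf z.1 < l.length := List.idxOf_lt_length_iff.mpr (hmem_l z hz)
        omega)
      rwa [List.take_length] at this
    omega
  -- strict monotonicity across blocks
  have hstrict : ∀ z ∈ S, ∀ w ∈ S, l.idxOf z.1 < l.idxOf w.1 → idx z < idx w := by
    intro z hz w hw hlt
    have h1 : idx z < (L.take (l.idxOf z.1 + 1)).sum := by
      rw [hstep z hz]
      exact Nat.add_lt_add_left (hpos_lt z hz) _
    have h2 : (L.take (l.idxOf z.1 + 1)).sum ≤ (L.take (l.idxOf w.1)).sum :=
      hmono _ _ hlt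
    have h3 : (L.take (l.idxOf w.1)).sum ≤ idx w := Nat.le_add_right _ _
    omega
  have hposinj : ∀ z ∈ S, ∀ w ∈ S, z.1 = w.1 → pos z = pos w → z = w := by
    intro z hz w hw h1 hpq
    have hFeq : F z.1 = F w.1 := by rw [h1]
    have hzm : z ∈ (F z.1).toList := Finset.mem_toList.mpr (hzF z hz)
    have hwm : w ∈ (F z.1).toList := by
      rw [hFeq]; exact Finset.mem_toList.mpr (hzF w hw)
    rw [hposdef] at hpq
    simp only at hpq
    rw [← hFeq] at hpq
    exact (@List.idxOf_inj _ instBEqOfDecidableEq _ _ _ _ hzm).mp hpq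
  have hidx_inj : ∀ z ∈ S, ∀ w ∈ S, idx z = idx w → z = w := by
    intro z hz w hw he
    by_cases h1 : z.1 = w.1
    · apply hposinj z hz w hw h1
      rw [hidxdef] at he
      simp only at he
      rw [h1] at he
      omega
    · exfalso
      have hne : l.idxOf z.1 ≠ l.idxOf w.1 := by
        intro hc
        exact h1 ((List.idxOf_inj (hmem_l z hz)).mp hc)
      rcases lt_or_gt_of_ne hne with h | h
      · exact absurd he (Nat.ne_of_lt (hstrict z hz w hw h))
      · exact absurd he.symm (Nat.ne_of_lt (hstrict w hw z hz h))
  -- same first coordinate and same residue implies equal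
  have hsame : ∀ z ∈ S, ∀ w ∈ S, z.1 = w.1 → idx z % K₂ = idx w % K₂ → z = w := by
    intro z hz w hw h1 hmod
    have hpK : pos z < K₂ := lt_of_lt_of_le (hpos_lt z hz) (hfib1 z.1)
    have hqK : pos w < K₂ := lt_of_lt_of_le (hpos_lt w hw) (hfib1 w.1)
    rw [hidxdef] at hmod
    simp only at hmod
    rw [h1] at hmod
    have hmeq : pos z ≡ pos w [MOD K₂] :=
      Nat.ModEq.add_left_cancel' _ hmod
    have hpq : pos z = pos w := by
      have := hmeq
      rw [Nat.ModEq, Nat.mod_eq_of_lt hpK, Nat.mod_eq_of_lt hqK] at this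
      exact this
    exact hposinj z hz w hw h1 hpq
  -- define the partition
  refine ⟨fun i => S.filter (fun z => idx z % K₂ = i.val), ?_, ?_, ?_, ?_⟩
  · intro i j hij
    rw [Finset.disjoint_left]
    intro z hz1 hz2
    rw [Finset.mem_filter] at hz1 hz2
    exact hij (Fin.ext (hz1.2 ▸ hz2.2))
  · ext z
    simp only [Finset.mem_biUnion, Finset.mem_univ, true_and, Finset.mem_filter]
    constructor
    · rintro ⟨i, hz, -⟩; exact hz
    · intro hz
      exact ⟨⟨idx z % K₂, Nat.mod_lt _ hK₂⟩, hz, rfl⟩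
  · intro i
    have hr : (Finset.range K₁).card = K₁ := Finset.card_range _
    rw [← hr]
    apply Finset.card_le_card_of_injOn (fun z => idx z / K₂)
    · intro z hz
      rw [Finset.mem_coe, Finset.mem_filter] at hz
      rw [Finset.mem_coe, Finset.mem_range]
      have h' : idx z < K₁ * K₂ := lt_of_lt_of_le (hidx_lt z hz.1) hS
      rw [Nat.div_lt_iff_lt_mul hK₂]
      exact h'
    · intro z hz w hw he
      rw [Finset.coe_filter, Set.mem_setOf_eq] at hz hw
      apply hidx_inj z hz.1 w hw.1
      have he' : idx z / K₂ = idx w / K₂ := he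
      have h3 : idx z % K₂ = idx w % K₂ := by rw [hz.2, hw.2]
      calc idx z = K₂ * (idx z / K₂) + idx z % K₂ := (Nat.div_add_mod _ _).symm
        _ = K₂ * (idx w / K₂) + idx w % K₂ := by rw [he', h3]
        _ = idx w := Nat.div_add_mod _ _
  · intro i x₁
    rw [Finset.card_le_one]
    intro z hz w hw
    simp only [Finset.mem_filter] at hz hw
    exact hsame z hz.1.1 w hw.1.1 (by rw [hz.2, hw.2]) (by rw [hz.1.2, hw.1.2])
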